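/- Let A ∈ ℝ^{n×n}, C ∈ ℝ^{1×n}, and h > 0. Define the 2n×2n block matrix M := [[Aᵀ, CᵀC],[0, −A]], and write its exponential as exp(Mh) = [[F₁₁, F₁₂],[0, F₂₂]]. Then F₂₂ = e^{−Ah} and F₂₂ᵀ F₁₂ = ∫₀^h e^{−Aᵀτ} Cᵀ C e^{−Aτ} dτ. -/

import Mathlib

open Matrix NormedSpace
open scoped Nat

section Aux

attribute [local instance] Matrix.linftyOpSemiNormedRing Matrix.linftyOpNormedRing
  Matrix.linftyOpNormedAlgebra

variable {n : ℕ}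

private lemma pow_blocks (P Q R : Matrix (Fin n) (Fin n) ℝ) (k : ℕ) :
    ∃ X, (fromBlocks P Q 0 R) ^ k = fromBlocks (P ^ k) X 0 (R ^ k) := by
  induction k with
  | zero => exact ⟨0, by rw [pow_zero, pow_zero, pow_zero, fromBlocks_one]⟩
  | succ k ih =>
    obtain ⟨X, hX⟩ := ih
    refine ⟨P ^ k * Q + X * R, ?_⟩
    rw [pow_succ, pow_succ, pow_succ, hX, fromBlocks_multiply]
    simp

/-- The continuous linear map extracting a submatrix. -/
private def subCLM (f g : Fin n → Fin n ⊕ Fin n) :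
    Matrix (Fin n ⊕ Fin n) (Fin n ⊕ Fin n) ℝ →L[ℝ] Matrix (Fin n) (Fin n) ℝ where
  toLinearMap :=
    { toFun := fun X => X.submatrix f g
      map_add' := fun _ _ => rfl
      map_smul' := fun _ _ => rfl }
  cont := continuous_pi fun i => continuous_pi fun j =>
    (continuous_apply (g j)).comp (continuous_apply (f i))

@[simp] private lemma subCLM_apply (f g : Fin n → Fin n ⊕ Fin n)
    (X : Matrix (Fin n ⊕ Fin n) (Fin n ⊕ Fin n) ℝ) :
    subCLM f g X = X.submatrix f g := rfl

/-- The continuous linear map extracting an entry. -/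
private def entryCLM (i j : Fin n) : Matrix (Fin n) (Fin n) ℝ →L[ℝ] ℝ where
  toLinearMap :=
    { toFun := fun X => X i j
      map_add' := fun _ _ => rfl
      map_smul' := fun _ _ => rfl }
  cont := (continuous_apply j).comp (continuous_apply i)

@[simp] private lemma entryCLM_apply (i j : Fin n) (X : Matrix (Fin n) (Fin n) ℝ) :
    entryCLM i j X = X i j := rfl

private lemma exp_key (P Q R : Matrix (Fin n) (Fin n) ℝ)
    (f g : Fin n → Fin n ⊕ Fin n) :
    (exp (fromBlocks P Q 0 R)).submatrix f g
      = ∑' k : ℕ, (k ! : ℝ)⁻¹ • ((fromBlocks P Q 0 R) ^ k).submatrix f g := by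
  have hsum : Summable (fun k : ℕ => (k ! : ℝ)⁻¹ • (fromBlocks P Q 0 R) ^ k) :=
    expSeries_summable' (𝕂 := ℝ) _
  have h := (subCLM f g).map_tsum hsum
  rw [exp_eq_tsum (𝕂 := ℝ)]
  simpa using h

private lemma expB11 (P Q R : Matrix (Fin n) (Fin n) ℝ) :
    (exp (fromBlocks P Q 0 R)).toBlocks₁₁ = exp P := by
  show (exp (fromBlocks P Q 0 R)).submatrix Sum.inl Sum.inl = exp P
  rw [exp_key P Q R Sum.inl Sum.inl, exp_eq_tsum (𝕂 := ℝ)]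
  congr 1
  funext k
  obtain ⟨X, hX⟩ := pow_blocks P Q R k
  rw [hX]
  show (k ! : ℝ)⁻¹ • (fromBlocks (P ^ k) X 0 (R ^ k)).toBlocks₁₁ = (k ! : ℝ)⁻¹ • P ^ k
  rw [toBlocks_fromBlocks₁₁]

private lemma expB21 (P Q R : Matrix (Fin n) (Fin n) ℝ) :
    (exp (fromBlocks P Q 0 R)).toBlocks₂₁ = 0 := by
  show (exp (fromBlocks P Q 0 R)).submatrix Sum.inr Sum.inl = 0
  rw [exp_key P Q R Sum.inr Sum.inl]
  convert tsum_zero with k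
  obtain ⟨X, hX⟩ := pow_blocks P Q R k
  rw [hX]
  show (k ! : ℝ)⁻¹ • (fromBlocks (P ^ k) X 0 (R ^ k)).toBlocks₂₁ = 0
  rw [toBlocks_fromBlocks₂₁, smul_zero]

private lemma expB22 (P Q R : Matrix (Fin n) (Fin n) ℝ) :
    (exp (fromBlocks P Q 0 R)).toBlocks₂₂ = exp R := by
  show (exp (fromBlocks P Q 0 R)).submatrix Sum.inr Sum.inr = exp R
  rw [exp_key P Q R Sum.inr Sum.inr, exp_eq_tsum (𝕂 := ℝ)]
  congr 1
  funext k
  obtain ⟨X, hX⟩ := pow_blocks P Q R k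
  rw [hX]
  show (k ! : ℝ)⁻¹ • (fromBlocks (P ^ k) X 0 (R ^ k)).toBlocks₂₂ = (k ! : ℝ)⁻¹ • R ^ k
  rw [toBlocks_fromBlocks₂₂]

private lemma exp_blocks (P Q R : Matrix (Fin n) (Fin n) ℝ) :
    exp (fromBlocks P Q 0 R) =
      fromBlocks (exp P) ((exp (fromBlocks P Q 0 R)).toBlocks₁₂) 0 (exp R) := by
  conv_lhs => rw [← fromBlocks_toBlocks (exp (fromBlocks P Q 0 R)),
    expB11, expB21, expB22]

private lemma smul_fb (A : Matrix (Fin n) (Fin n) ℝ) (C : Matrix (Fin 1) (Fin n) ℝ) (t : ℝ) :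
    t • (fromBlocks Aᵀ (Cᵀ * C) 0 (-A) : Matrix (Fin n ⊕ Fin n) (Fin n ⊕ Fin n) ℝ)
      = fromBlocks (t • Aᵀ) (t • (Cᵀ * C)) 0 (t • (-A)) := by
  rw [fromBlocks_smul, smul_zero]

private lemma exp_key_t (A : Matrix (Fin n) (Fin n) ℝ) (C : Matrix (Fin 1) (Fin n) ℝ) (t : ℝ) :
    exp (t • (fromBlocks Aᵀ (Cᵀ * C) 0 (-A) : Matrix (Fin n ⊕ Fin n) (Fin n ⊕ Fin n) ℝ)) =
      fromBlocks (exp (t • Aᵀ))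
        ((exp (t • (fromBlocks Aᵀ (Cᵀ * C) 0 (-A) :
            Matrix (Fin n ⊕ Fin n) (Fin n ⊕ Fin n) ℝ))).toBlocks₁₂)
        0 (exp (t • (-A))) := by
  have h := exp_blocks (t • Aᵀ) (t • (Cᵀ * C)) (t • (-A))
  rw [← smul_fb] at h
  exact h

private lemma main3 (A : Matrix (Fin n) (Fin n) ℝ) (C : Matrix (Fin 1) (Fin n) ℝ)
    (h : ℝ) (i j : Fin n) :
    (((exp (h • (fromBlocks Aᵀ (Cᵀ * C) 0 (-A) :
        Matrix (Fin n ⊕ Fin n) (Fin n ⊕ Fin n) ℝ))).toBlocks₂₂)ᵀ *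
      (exp (h • (fromBlocks Aᵀ (Cᵀ * C) 0 (-A) :
        Matrix (Fin n ⊕ Fin n) (Fin n ⊕ Fin n) ℝ))).toBlocks₁₂) i j
    = ∫ τ in (0:ℝ)..h,
        (exp (τ • (-Aᵀ)) * (Cᵀ * C) * exp (τ • (-A))) i j := by
  set N : Matrix (Fin n ⊕ Fin n) (Fin n ⊕ Fin n) ℝ := fromBlocks Aᵀ (Cᵀ * C) 0 (-A) with hN
  -- derivative of Φ : t ↦ exp(t • (-Aᵀ)) * (exp (t • N)).toBlocks₁₂
  have hderiv : ∀ t : ℝ,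
      HasDerivAt (fun u : ℝ => exp (u • (-Aᵀ)) * (exp (u • N)).toBlocks₁₂)
        (exp (t • (-Aᵀ)) * (Cᵀ * C) * exp (t • (-A))) t := by
    intro t
    have h1 : HasDerivAt (fun u : ℝ => exp (u • (-Aᵀ))) (exp (t • (-Aᵀ)) * (-Aᵀ)) t :=
      hasDerivAt_exp_smul_const (-Aᵀ) t
    have h2 : HasDerivAt (fun u : ℝ => exp (u • N)) (N * exp (t • N)) t :=
      hasDerivAt_exp_smul_const' N t
    have h3 : HasDerivAt (fun u : ℝ => (exp (u • N)).toBlocks₁₂)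
        ((N * exp (t • N)).toBlocks₁₂) t := by
      have h3' := (subCLM Sum.inl Sum.inr).hasFDerivAt.comp_hasDerivAt t h2
      exact h3'
    have h4 := h1.mul h3
    have hMB : (N * exp (t • N)).toBlocks₁₂
        = Aᵀ * (exp (t • N)).toBlocks₁₂ + (Cᵀ * C) * exp (t • (-A)) := by
      conv_lhs => rw [exp_key_t A C t]
      rw [hN, fromBlocks_multiply, toBlocks_fromBlocks₁₂]
    rw [hMB] at h4
    exact h4.congr_deriv (by noncomm_ring)
  have hc : Continuous (fun τ : ℝ =>
      exp (τ • (-Aᵀ)) * (Cᵀ * C) * exp (τ • (-A))) := by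
    have hce : Continuous (exp : Matrix (Fin n) (Fin n) ℝ → Matrix (Fin n) (Fin n) ℝ) :=
      exp_continuous
    exact ((hce.comp (continuous_id.smul continuous_const)).mul continuous_const).mul
      (hce.comp (continuous_id.smul continuous_const))
  have h1b : (1 : Matrix (Fin n ⊕ Fin n) (Fin n ⊕ Fin n) ℝ).toBlocks₁₂ = 0 := by
    rw [← fromBlocks_one]
    exact toBlocks_fromBlocks₁₂ _ _ _ _
  have h0 : exp ((0:ℝ) • (-Aᵀ)) * (exp ((0:ℝ) • N)).toBlocks₁₂ = 0 := by
    rw [zero_smul, zero_smul, exp_zero, exp_zero, h1b, mul_zero]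
  have hT : (exp (h • (-A)))ᵀ = exp (h • (-Aᵀ)) := by
    rw [← Matrix.exp_transpose, transpose_smul, transpose_neg]
  have hgi : ∀ t : ℝ, HasDerivAt
      (fun u : ℝ => (exp (u • (-Aᵀ)) * (exp (u • N)).toBlocks₁₂) i j)
      ((exp (t • (-Aᵀ)) * (Cᵀ * C) * exp (t • (-A))) i j) t := by
    intro t
    have hg' := (entryCLM i j).hasFDerivAt.comp_hasDerivAt t (hderiv t)
    exact hg'
  have hint : (∫ τ in (0:ℝ)..h,
      (exp (τ • (-Aᵀ)) * (Cᵀ * C) * exp (τ • (-A))) i j)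
      = (exp (h • (-Aᵀ)) * (exp (h • N)).toBlocks₁₂) i j
        - (exp ((0:ℝ) • (-Aᵀ)) * (exp ((0:ℝ) • N)).toBlocks₁₂) i j := by
    refine intervalIntegral.integral_eq_sub_of_hasDerivAt (fun t _ => hgi t) ?_
    exact ((continuous_apply j).comp ((continuous_apply i).comp hc)).intervalIntegrable 0 h
  have h22 : (exp (h • N)).toBlocks₂₂ = exp (h • (-A)) := by
    rw [exp_key_t A C h, toBlocks_fromBlocks₂₂]
  rw [h22, hT, hint, h0]
  simp

end Aux

theorem stmt_8 (n : ℕ) (A : Matrix (Fin n) (Fin n) ℝ)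
    (C : Matrix (Fin 1) (Fin n) ℝ) (h : ℝ) (hh : 0 < h)
    (M : Matrix (Fin n ⊕ Fin n) (Fin n ⊕ Fin n) ℝ)
    (hM : M = Matrix.fromBlocks Aᵀ (Cᵀ * C) 0 (-A))
    (E : Matrix (Fin n ⊕ Fin n) (Fin n ⊕ Fin n) ℝ)
    (hE : E = NormedSpace.exp (h • M)) :
    E.toBlocks₂₁ = 0 ∧
    E.toBlocks₂₂ = NormedSpace.exp (h • (-A)) ∧
    (E.toBlocks₂₂)ᵀ * E.toBlocks₁₂ =
      Matrix.of (fun i j : Fin n =>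
        ∫ τ in (0:ℝ)..h,
          (NormedSpace.exp (τ • (-Aᵀ)) * (Cᵀ * C) *
            NormedSpace.exp (τ • (-A))) i j) := by
  subst hM
  subst hE
  refine ⟨?_, ?_, ?_⟩
  · show (NormedSpace.exp
        (h • fromBlocks Aᵀ (Cᵀ * C) 0 (-A))).toBlocks₂₁ = 0
    have hs : h • (fromBlocks Aᵀ (Cᵀ * C) 0 (-A) :
        Matrix (Fin n ⊕ Fin n) (Fin n ⊕ Fin n) ℝ)
        = fromBlocks (h • Aᵀ) (h • (Cᵀ * C)) 0 (h • (-A)) := by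
      rw [fromBlocks_smul, smul_zero]
    rw [hs]
    exact expB21 _ _ _
  · show (NormedSpace.exp
        (h • fromBlocks Aᵀ (Cᵀ * C) 0 (-A))).toBlocks₂₂ = NormedSpace.exp (h • (-A))
    have hs : h • (fromBlocks Aᵀ (Cᵀ * C) 0 (-A) :
        Matrix (Fin n ⊕ Fin n) (Fin n ⊕ Fin n) ℝ)
        = fromBlocks (h • Aᵀ) (h • (Cᵀ * C)) 0 (h • (-A)) := by
      rw [fromBlocks_smul, smul_zero]
    rw [hs]
    exact expB22 _ _ _
  · ext i j
    rw [Matrix.of_apply]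
    exact main3 A C h i j
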